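/- For n ≥ 2, the matrix Q (as above, the intersection form of C_n) is negative definite. -/

import Mathlib

open Finset

private lemma key_Cn (n : ℕ) (y : ℕ → ℝ) : ∀ m : ℕ, 1 ≤ m →
    ∑ i ∈ range m, ∑ j ∈ range m, y i *
      ((if i = j then (if i = 0 then -((n:ℝ)+2) else -2)
        else if i+1=j ∨ j+1=i then (1:ℝ) else 0) * y j)
    = -((n:ℝ)+1) * y 0 ^ 2 - y (m-1) ^ 2
      - ∑ i ∈ range (m-1), (y i - y (i+1))^2 := by
  intro m
  induction m with
  | zero => omega
  | succ m ih =>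
    intro _
    rcases Nat.eq_zero_or_pos m with h0 | hm1
    · subst h0
      simp [sum_range_succ]
      ring
    · obtain ⟨k, rfl⟩ : ∃ k, m = k + 1 := ⟨m - 1, by omega⟩
      -- peel outer i = k+1
      rw [sum_range_succ]
      -- inner sums for i < k+1 : peel j = k+1
      have h1 : ∀ i ∈ range (k+1),
          (∑ j ∈ range (k+2), y i *
            ((if i = j then (if i = 0 then -((n:ℝ)+2) else -2)
              else if i+1=j ∨ j+1=i then (1:ℝ) else 0) * y j))
          = (∑ j ∈ range (k+1), y i *
            ((if i = j then (if i = 0 then -((n:ℝ)+2) else -2)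
              else if i+1=j ∨ j+1=i then (1:ℝ) else 0) * y j))
            + y i * ((if i+1=k+1 ∨ k+2=i then (1:ℝ) else 0) * y (k+1)) := by
        intro i hi
        rw [sum_range_succ]
        simp only [mem_range] at hi
        rw [if_neg (by omega : ¬ i = k+1)]
      rw [sum_congr rfl h1, sum_add_distrib, ih hm1]
      have hcol : (∑ i ∈ range (k+1),
            y i * ((if i+1=k+1 ∨ k+2=i then (1:ℝ) else 0) * y (k+1)))
          = y k * y (k+1) := by
        rw [sum_range_succ]
        have hz : ∀ i ∈ range k,
            y i * ((if i+1=k+1 ∨ k+2=i then (1:ℝ) else 0) * y (k+1)) = 0 := by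
          intro i hi
          simp only [mem_range] at hi
          rw [if_neg (by omega)]
          ring
        rw [sum_eq_zero hz, if_pos (by omega : k+1=k+1 ∨ k+2=k)]
        ring
      have hrow : (∑ j ∈ range (k+2), y (k+1) *
            ((if k+1 = j then (if k+1 = 0 then -((n:ℝ)+2) else -2)
              else if k+2=j ∨ j+1=k+1 then (1:ℝ) else 0) * y j))
          = y (k+1) * (-2 * y (k+1)) + y (k+1) * y k := by
        rw [sum_range_succ, if_pos rfl, if_neg (by omega : ¬ k + 1 = 0),
            sum_range_succ]
        have hz : ∀ j ∈ range k,
            y (k+1) * ((if k+1 = j then (-2:ℝ)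
              else if k+2=j ∨ j+1=k+1 then (1:ℝ) else 0) * y j) = 0 := by
          intro j hj
          simp only [mem_range] at hj
          rw [if_neg (by omega : ¬ k+1 = j), if_neg (by omega)]
          ring
        rw [sum_eq_zero hz, if_neg (by omega : ¬ k+1 = k),
            if_pos (by omega : k+2 = k ∨ k+1 = k+1)]
        ring
      rw [hcol, hrow]
      simp only [Nat.add_sub_cancel]
      rw [sum_range_succ]
      ring

/-- The intersection matrix of the plumbing `C_n` is negative definite:
for every nonzero real vector `x`, `xᵀ Q x < 0`. -/
theorem intersection_matrix_Cn_negDef (n : ℕ) (hn : 2 ≤ n)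
    (Q : Matrix (Fin (n - 1)) (Fin (n - 1)) ℝ)
    (hQ : ∀ i j : Fin (n - 1), Q i j =
      if i = j then (if (i : ℕ) = 0 then -((n : ℝ) + 2) else -2)
      else if (i : ℕ) + 1 = (j : ℕ) ∨ (j : ℕ) + 1 = (i : ℕ) then 1 else 0) :
    ∀ x : Fin (n - 1) → ℝ, x ≠ 0 → dotProduct x (Q.mulVec x) < 0 := by
  intro x hx
  have hm1 : 1 ≤ n - 1 := by omega
  set y : ℕ → ℝ := fun i => if h : i < n - 1 then x ⟨i, h⟩ else 0 with hy
  have hyx : ∀ i : Fin (n-1), y (i : ℕ) = x i := by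
    intro i; simp [hy, i.isLt]
  have hq : dotProduct x (Q.mulVec x)
      = ∑ i ∈ range (n-1), ∑ j ∈ range (n-1), y i *
        ((if i = j then (if i = 0 then -((n:ℝ)+2) else -2)
          else if i+1=j ∨ j+1=i then (1:ℝ) else 0) * y j) := by
    rw [dotProduct, ← Fin.sum_univ_eq_sum_range]
    refine Finset.sum_congr rfl ?_
    intro i _
    rw [Matrix.mulVec, dotProduct, Finset.mul_sum,
        ← Fin.sum_univ_eq_sum_range]
    refine Finset.sum_congr rfl ?_
    intro j _
    rw [hQ i j, hyx i, hyx j]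
    congr 2
    simp [Fin.ext_iff]
  rw [hq, key_Cn n y (n-1) hm1]
  have hS : (0:ℝ) ≤ ∑ i ∈ range (n-1-1), (y i - y (i+1))^2 :=
    Finset.sum_nonneg fun i _ => sq_nonneg _
  have hA : 0 < ((n:ℝ)+1) * y 0 ^ 2 + y (n-1-1) ^ 2
      + ∑ i ∈ range (n-1-1), (y i - y (i+1))^2 := by
    by_contra hle
    push_neg at hle
    have hn1 : (0:ℝ) < (n:ℝ)+1 := by positivity
    have hA0 : ((n:ℝ)+1) * y 0 ^ 2 = 0 := by
      nlinarith [sq_nonneg (y 0), sq_nonneg (y (n-1-1)), hS]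
    have hAS : (∑ i ∈ range (n-1-1), (y i - y (i+1))^2) = 0 := by
      nlinarith [sq_nonneg (y 0), sq_nonneg (y (n-1-1)), hS]
    have hy0 : y 0 = 0 := by
      rcases mul_eq_zero.mp hA0 with h | h
      · linarith
      · exact pow_eq_zero_iff (by norm_num) |>.mp h
    have hdiff : ∀ i ∈ range (n-1-1), (y i - y (i+1))^2 = 0 :=
      (Finset.sum_eq_zero_iff_of_nonneg (fun i _ => sq_nonneg _)).mp hAS
    have hall : ∀ i, i < n - 1 → y i = 0 := by
      intro i
      induction i with
      | zero => intro _; exact hy0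
      | succ i ihh =>
        intro hi
        have h4 : y i - y (i+1) = 0 :=
          pow_eq_zero_iff (by norm_num) |>.mp (hdiff i (by simp; omega))
        have := ihh (by omega)
        linarith
    apply hx
    funext k
    have := hall k.val k.isLt
    rw [hyx k] at this
    exact this
  linarith
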